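/- Let A be a C*-algebra and let E ⊆ A be a selfadjoint subspace that is completely approximately 1-generated: for every n ∈ ℕ, {X ∈ Mₙ(E)_sa : ‖X‖ ≤ 1} is contained in the closure of {P − Q : P, Q ∈ Mₙ(E)₊, ‖P‖ ≤ 1, ‖Q‖ ≤ 1}. Let H be a complex Hilbert space and let θ : E → B(H) be a ℂ-linear map with θ(star x) = star(θ x) which is completely isometric (‖θ⁽ⁿ⁾ X‖ = ‖X‖ for all n and X ∈ Mₙ(E)) and a complete order embedding (for all n and X ∈ Mₙ(E): 0 ≤ θ⁽ⁿ⁾ X in Mₙ(B(H)) if and only if 0 ≤ X in Mₙ(A)). Then θ is a gauge maximal isometry: for every n and every selfadjoint X ∈ Mₙ(E), Metric.infDist X Mₙ(E)₊ = Metric.infDist (θ⁽ⁿ⁾ X) (positive cone of Mₙ(B(H))). -/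

import Mathlib

noncomputable section

open scoped CStarAlgebra

/-- Helper: `a ≤ b + ε` for all positive `ε` implies `a ≤ b`. -/
private lemma le_of_forall_pos_le_add' {a b : ℝ} (h : ∀ ε : ℝ, 0 < ε → a ≤ b + ε) : a ≤ b := by
  by_contra hlt
  push_neg at hlt
  have := h ((a - b) / 2) (by linarith)
  linarith

/-- In a C⋆-algebra, the difference of two positive contractions is a contraction. -/
private lemma norm_sub_le_one_of_nonneg {B : Type*} [NonUnitalCStarAlgebra B] [PartialOrder B]
    [StarOrderedRing B] {p a : B} (hp : 0 ≤ p) (hp1 : ‖p‖ ≤ 1) (ha : 0 ≤ a) (ha1 : ‖a‖ ≤ 1) :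
    ‖p - a‖ ≤ 1 := by
  rw [← Unitization.norm_inr (𝕜 := ℂ) (p - a), Unitization.inr_sub ℂ p a]
  have hPmem : (p : B⁺¹) ∈ Set.Icc 0 1 := CStarAlgebra.inr_mem_Icc_iff_norm_le.mpr ⟨hp, hp1⟩
  have hAmem : (a : B⁺¹) ∈ Set.Icc 0 1 := CStarAlgebra.inr_mem_Icc_iff_norm_le.mpr ⟨ha, ha1⟩
  obtain ⟨hP0, hP1⟩ := hPmem
  obtain ⟨hA0, hA1⟩ := hAmem
  have hsa : IsSelfAdjoint ((p : B⁺¹) - (a : B⁺¹)) :=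
    (IsSelfAdjoint.of_nonneg hP0).sub (IsSelfAdjoint.of_nonneg hA0)
  have hub : (p : B⁺¹) - (a : B⁺¹) ≤ algebraMap ℝ (B⁺¹) 1 := by
    rw [map_one]
    calc (p : B⁺¹) - (a : B⁺¹) ≤ (p : B⁺¹) := sub_le_self _ hA0
      _ ≤ 1 := hP1
  have hlb : algebraMap ℝ (B⁺¹) (-1) ≤ (p : B⁺¹) - (a : B⁺¹) := by
    rw [map_neg, map_one]
    have h1 : -(1 : B⁺¹) ≤ -(a : B⁺¹) := neg_le_neg hA1
    have h2 : -(a : B⁺¹) ≤ (p : B⁺¹) - (a : B⁺¹) := by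
      simpa using sub_le_sub_right hP0 (a : B⁺¹)
    exact h1.trans h2
  have hspec_ub := (le_algebraMap_iff_spectrum_le (R := ℝ)
    (a := (p : B⁺¹) - (a : B⁺¹)) hsa).mp hub
  have hspec_lb := (algebraMap_le_iff_le_spectrum (R := ℝ)
    (a := (p : B⁺¹) - (a : B⁺¹)) hsa).mp hlb
  rcases CStarAlgebra.norm_or_neg_norm_mem_spectrum hsa with h | h
  · exact hspec_ub _ h
  · have := hspec_lb _ h
    linarith

open Metric in
/-- **Core lemma.** If `C` is a convex cone of positive elements of a C⋆-algebra, contained in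
a real subspace `V` all of whose contractions are approximately differences of contractions
from `C`, then for every `x ∈ V`, the distance of `x` to `C` equals the distance of `x` to the
full positive cone. -/
private lemma core_lemma {B : Type*} [NonUnitalCStarAlgebra B] [PartialOrder B]
    [StarOrderedRing B] (C : Set B) (V : Submodule ℝ B)
    (hCpos : ∀ c ∈ C, 0 ≤ c)
    (hC0 : (0 : B) ∈ C)
    (hCadd : ∀ c ∈ C, ∀ d ∈ C, c + d ∈ C)
    (hCsmul : ∀ t : ℝ, 0 < t → ∀ c ∈ C, t • c ∈ C)
    (hCV : C ⊆ (V : Set B))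
    (hgen : ∀ v ∈ V, ‖v‖ ≤ 1 →
      v ∈ closure {y : B | ∃ p ∈ C, ∃ q ∈ C, ‖p‖ ≤ 1 ∧ ‖q‖ ≤ 1 ∧ y = p - q})
    (x : B) (hxV : x ∈ V) :
    infDist x C = infDist x {z : B | 0 ≤ z} := by
  have hCne : C.Nonempty := ⟨0, hC0⟩
  have hPne : ({z : B | 0 ≤ z}).Nonempty := ⟨0, le_refl (0 : B)⟩
  refine le_antisymm ?_ (infDist_le_infDist_of_subset (fun c hc => hCpos c hc) hCne)
  by_cases hx0 : x = 0
  · subst hx0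
    rw [infDist_zero_of_mem hC0]
    exact infDist_nonneg
  set φ : B → ℝ := fun w => infDist w C with hφ
  have φ_le_norm : ∀ w, φ w ≤ ‖w‖ := fun w => by
    simpa [dist_eq_norm] using infDist_le_dist_of_mem (x := w) hC0
  have φ_add : ∀ u v, φ (u + v) ≤ φ u + φ v := by
    intro u v
    refine le_of_forall_pos_le_add' fun ε hε => ?_
    obtain ⟨c, hcC, hc⟩ := (infDist_lt_iff hCne).mp
      (show infDist u C < φ u + ε / 2 from lt_add_of_pos_right _ (by linarith))
    obtain ⟨d, hdC, hd⟩ := (infDist_lt_iff hCne).mp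
      (show infDist v C < φ v + ε / 2 from lt_add_of_pos_right _ (by linarith))
    calc φ (u + v) ≤ dist (u + v) (c + d) := infDist_le_dist_of_mem (hCadd c hcC d hdC)
      _ ≤ dist u c + dist v d := by
          simp only [dist_eq_norm, add_sub_add_comm]
          exact norm_add_le _ _
      _ ≤ φ u + φ v + ε := by linarith
  have φ_smul_le : ∀ t : ℝ, 0 < t → ∀ w, φ (t • w) ≤ t * φ w := by
    intro t ht w
    refine le_of_forall_pos_le_add' fun ε hε => ?_
    obtain ⟨c, hcC, hc⟩ := (infDist_lt_iff hCne).mp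
      (show infDist w C < φ w + ε / t from lt_add_of_pos_right _ (by positivity))
    have hdist : dist (t • w) (t • c) = t * dist w c := by
      simp only [dist_eq_norm, ← smul_sub, norm_smul, Real.norm_eq_abs, abs_of_pos ht]
    calc φ (t • w) ≤ dist (t • w) (t • c) := infDist_le_dist_of_mem (hCsmul t ht c hcC)
      _ = t * dist w c := hdist
      _ ≤ t * (φ w + ε / t) := mul_le_mul_of_nonneg_left hc.le ht.le
      _ = t * φ w + ε := by field_simp
  have φ_smul : ∀ t : ℝ, 0 < t → ∀ w, φ (t • w) = t * φ w := by
    intro t ht w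
    refine le_antisymm (φ_smul_le t ht w) ?_
    have h2 := φ_smul_le t⁻¹ (by positivity) (t • w)
    rw [inv_smul_smul₀ ht.ne'] at h2
    calc t * φ w ≤ t * (t⁻¹ * φ (t • w)) := mul_le_mul_of_nonneg_left h2 ht.le
      _ = φ (t • w) := by field_simp
  -- Hahn–Banach extension of the linear functional `c • x ↦ c * φ x` dominated by `φ`
  have hfp : ∀ z : (LinearPMap.mkSpanSingleton (K := ℝ) x (φ x) hx0 : B →ₗ.[ℝ] ℝ).domain,
      (LinearPMap.mkSpanSingleton (K := ℝ) x (φ x) hx0 : B →ₗ.[ℝ] ℝ) z ≤ φ z := by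
    rintro ⟨z, hz⟩
    obtain ⟨c, rfl⟩ := Submodule.mem_span_singleton.mp hz
    have happ : (LinearPMap.mkSpanSingleton (K := ℝ) x (φ x) hx0 : B →ₗ.[ℝ] ℝ) ⟨c • x, hz⟩ = c * φ x := by
      simpa [smul_eq_mul] using LinearPMap.mkSpanSingleton'_apply (R := ℝ) x (φ x) _ c hz
    rw [happ]
    show c * φ x ≤ φ (c • x)
    rcases lt_trichotomy c 0 with hc | hc | hc
    · have h1 := φ_add (c • x) ((-c) • x)
      rw [← add_smul, add_neg_cancel, zero_smul] at h1
      have h2 : φ ((-c) • x) = (-c) * φ x := φ_smul (-c) (by linarith) x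
      have h3 : φ (0 : B) = 0 := infDist_zero_of_mem hC0
      rw [h3, h2] at h1
      nlinarith [h1]
    · subst hc
      have h3 : φ (0 : B) = 0 := infDist_zero_of_mem hC0
      simp [h3]
    · rw [φ_smul c hc x]
  obtain ⟨G, hGext, hGle⟩ := exists_extension_of_le_sublinear
    (LinearPMap.mkSpanSingleton (K := ℝ) x (φ x) hx0 : B →ₗ.[ℝ] ℝ) φ
    (fun c hc w => φ_smul c hc w) φ_add hfp
  have hGx : G x = φ x := by
    have h := hGext ⟨x, Submodule.mem_span_singleton_self x⟩
    rw [LinearPMap.mkSpanSingleton_apply ℝ ℝ hx0 (φ x)] at h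
    exact h
  have hGnorm : ∀ w, |G w| ≤ ‖w‖ := by
    intro w
    rw [abs_le]
    constructor
    · have h1 := (hGle (-w)).trans (φ_le_norm (-w))
      rw [map_neg, norm_neg] at h1
      linarith
    · exact (hGle w).trans (φ_le_norm w)
  have hGC : ∀ c ∈ C, G c ≤ 0 := fun c hc => (hGle c).trans_eq (infDist_zero_of_mem hc)
  set SB : Set ℝ := (fun p => -G p) '' {p | p ∈ C ∧ ‖p‖ ≤ 1} with hSB
  have h0SB : (0 : ℝ) ∈ SB := ⟨0, ⟨hC0, by simp⟩, by simp⟩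
  have hSBne : SB.Nonempty := ⟨0, h0SB⟩
  have hSBbdd : BddAbove SB := by
    refine ⟨1, ?_⟩
    rintro r ⟨p, ⟨hpC, hp1⟩, rfl⟩
    dsimp only
    have := hGnorm p
    have h2 : -G p ≤ |G p| := neg_le_abs _
    linarith
  set s : ℝ := sSup SB with hs
  have hs0 : 0 ≤ s := le_csSup hSBbdd h0SB
  have hs1 : s ≤ 1 := by
    refine csSup_le hSBne ?_
    rintro r ⟨p, ⟨hpC, hp1⟩, rfl⟩
    dsimp only
    have := hGnorm p
    have h2 : -G p ≤ |G p| := neg_le_abs _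
    linarith
  have hsC : ∀ p, p ∈ C → ‖p‖ ≤ 1 → -G p ≤ s := fun p h1 h2 =>
    le_csSup hSBbdd ⟨p, ⟨h1, h2⟩, rfl⟩
  have claimA : ∀ v ∈ V, |G v| ≤ s * ‖v‖ := by
    intro v hv
    rcases eq_or_ne v 0 with rfl | hv0
    · simp
    · have hvn : (0 : ℝ) < ‖v‖ := norm_pos_iff.mpr hv0
      have hv'V : ‖v‖⁻¹ • v ∈ V := V.smul_mem _ hv
      have hv'n : ‖‖v‖⁻¹ • v‖ ≤ 1 := by
        rw [norm_smul, Real.norm_eq_abs, abs_of_pos (by positivity)]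
        rw [inv_mul_cancel₀ hvn.ne']
      have hv'cl := hgen _ hv'V hv'n
      have key : |G (‖v‖⁻¹ • v)| ≤ s := by
        refine le_of_forall_pos_le_add' fun ε hε => ?_
        obtain ⟨y, hyD, hy⟩ := Metric.mem_closure_iff.mp hv'cl ε hε
        obtain ⟨p, hpC, q, hqC, hp1, hq1, rfl⟩ := hyD
        have h1 : G (‖v‖⁻¹ • v) = G (‖v‖⁻¹ • v - (p - q)) + G p - G q := by
          rw [map_sub, map_sub]; ring
        have h2 : |G (‖v‖⁻¹ • v - (p - q))| ≤ ε := by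
          refine (hGnorm _).trans ?_
          rw [← dist_eq_norm]
          exact hy.le
        obtain ⟨h2a, h2b⟩ := abs_le.mp h2
        have hGp1 : G p ≤ 0 := hGC p hpC
        have hGp2 : -G p ≤ s := hsC p hpC hp1
        have hGq1 : G q ≤ 0 := hGC q hqC
        have hGq2 : -G q ≤ s := hsC q hqC hq1
        rw [abs_le]
        constructor <;> [skip; skip] <;> rw [h1] <;> linarith
      have hGv' : G (‖v‖⁻¹ • v) = ‖v‖⁻¹ * G v := by
        rw [map_smul, smul_eq_mul]
      rw [hGv', abs_mul, abs_of_pos (show (0:ℝ) < ‖v‖⁻¹ by positivity)] at key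
      calc |G v| = ‖v‖ * (‖v‖⁻¹ * |G v|) := by field_simp
        _ ≤ ‖v‖ * s := mul_le_mul_of_nonneg_left key hvn.le
        _ = s * ‖v‖ := mul_comm _ _
  set G₁ : V →L[ℝ] ℝ := LinearMap.mkContinuous (G.comp V.subtype) s
    (fun v => by simpa [Real.norm_eq_abs] using claimA (v : B) v.2) with hG₁
  have hG₁norm : ‖G₁‖ ≤ s := LinearMap.mkContinuous_norm_le _ hs0 _
  obtain ⟨G₂, hG₂ext, hG₂norm⟩ := exists_extension_norm_eq V G₁
  have hG₂V : ∀ w : B, ∀ hw : w ∈ V, G₂ w = G w := by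
    intro w hw
    have h := hG₂ext ⟨w, hw⟩
    simpa [hG₁, LinearMap.mkContinuous_apply] using h
  have hG₂n : ‖G₂‖ ≤ s := by rw [hG₂norm]; exact hG₁norm
  have hG₂bound : ∀ w, |G₂ w| ≤ s * ‖w‖ := by
    intro w
    have := G₂.le_opNorm w
    rw [Real.norm_eq_abs] at this
    calc |G₂ w| ≤ ‖G₂‖ * ‖w‖ := this
      _ ≤ s * ‖w‖ := mul_le_mul_of_nonneg_right hG₂n (norm_nonneg w)
  -- `-G₂` is positive
  have hG₂pos : ∀ a : B, 0 ≤ a → G₂ a ≤ 0 := by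
    intro a ha
    rcases eq_or_ne a 0 with rfl | ha0
    · simp
    · have han : (0 : ℝ) < ‖a‖ := norm_pos_iff.mpr ha0
      have key : G₂ (‖a‖⁻¹ • a) ≤ 0 := by
        have ha' : 0 ≤ ‖a‖⁻¹ • a := smul_nonneg (by positivity) ha
        have ha'1 : ‖‖a‖⁻¹ • a‖ ≤ 1 := by
          rw [norm_smul, Real.norm_eq_abs, abs_of_pos (by positivity),
            inv_mul_cancel₀ han.ne']
        have : ∀ ε : ℝ, 0 < ε → G₂ (‖a‖⁻¹ • a) ≤ 0 + ε := by
          intro ε hε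
          obtain ⟨r, hrSB, hr⟩ := exists_lt_of_lt_csSup hSBne
            (show s - ε < s by linarith)
          obtain ⟨p, ⟨hpC, hp1⟩, rfl⟩ := hrSB
          dsimp only at hr
          have hnorm_sub : ‖p - ‖a‖⁻¹ • a‖ ≤ 1 :=
            norm_sub_le_one_of_nonneg (hCpos p hpC) hp1 ha' ha'1
          have h1 : |G₂ (p - ‖a‖⁻¹ • a)| ≤ s := by
            calc |G₂ (p - ‖a‖⁻¹ • a)| ≤ s * ‖p - ‖a‖⁻¹ • a‖ := hG₂bound _
              _ ≤ s * 1 := mul_le_mul_of_nonneg_left hnorm_sub hs0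
              _ = s := mul_one s
          have h2 : G₂ p = G p := hG₂V p (hCV hpC)
          have h3 : G₂ (‖a‖⁻¹ • a) = G₂ p - G₂ (p - ‖a‖⁻¹ • a) := by
            rw [map_sub]; ring
          obtain ⟨h1a, h1b⟩ := abs_le.mp h1
          rw [h3, h2]
          linarith
        exact le_of_forall_pos_le_add' (by simpa using this)
      have hsplit : G₂ a = ‖a‖ * G₂ (‖a‖⁻¹ • a) := by
        rw [map_smul, smul_eq_mul]
        field_simp
      rw [hsplit]
      exact mul_nonpos_iff.mpr (Or.inl ⟨han.le, key⟩)
  -- conclude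
  have hG₂x : G₂ x = φ x := by rw [hG₂V x hxV, hGx]
  have final : ∀ z : B, 0 ≤ z → infDist x C ≤ dist x z := by
    intro z hz
    have h2 : G₂ x = G₂ (x - z) + G₂ z := by rw [map_sub]; ring
    have h3 : |G₂ (x - z)| ≤ ‖x - z‖ := by
      calc |G₂ (x - z)| ≤ s * ‖x - z‖ := hG₂bound _
        _ ≤ 1 * ‖x - z‖ := mul_le_mul_of_nonneg_right hs1 (norm_nonneg _)
        _ = ‖x - z‖ := one_mul _
    obtain ⟨h3a, h3b⟩ := abs_le.mp h3
    have h4 : G₂ z ≤ 0 := hG₂pos z hz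
    have h5 : infDist x C = G₂ x := by rw [hG₂x]
    rw [h5, dist_eq_norm, h2]
    linarith
  refine le_of_not_gt fun hlt => ?_
  obtain ⟨z, hz, hdz⟩ := (infDist_lt_iff hPne).mp hlt
  exact absurd hdz (not_lt.mpr (final z hz))

/-- The `n`-th matrix level `Mₙ(E)` of a subspace `E` of a C*-algebra `A`, realized inside a
C*-algebra `M` given together with a ⋆-algebra isomorphism `e : Mₙ(A) ≃⋆ₐ[ℂ] M`. -/
def matrixLevelSet {A M : Type*} [NonUnitalCStarAlgebra A] [NonUnitalCStarAlgebra M] {n : ℕ}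
    (E : Submodule ℂ A) (e : Matrix (Fin n) (Fin n) A ≃⋆ₐ[ℂ] M) : Set M :=
  {X : M | ∀ i j, e.symm X i j ∈ E}

/-- **Theorem 4.17.** Let `E` be a completely approximately 1-generated
selfadjoint subspace of a C*-algebra `A`, and let `θ : E → B(H)` be a completely isometric
complete order embedding.  Then `θ` is a gauge maximal isometry:
`dist(X, Mₙ(E)₊) = dist(θ⁽ⁿ⁾ X, Mₙ(B(H))₊)` for every selfadjoint `X ∈ Mₙ(E)`.
(Matrix levels over `A` and over `B(H)` are realized via families of ⋆-isomorphisms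
onto C*-algebras `M n`, `N n`.) -/
theorem stmt_13 {A : Type*} [NonUnitalCStarAlgebra A] [PartialOrder A] [StarOrderedRing A]
    (E : Submodule ℂ A) (hEclosed : IsClosed (E : Set A)) (hEstar : ∀ x ∈ E, star x ∈ E)
    (M : ℕ → Type*) [∀ n, NonUnitalCStarAlgebra (M n)] [∀ n, PartialOrder (M n)]
    [∀ n, StarOrderedRing (M n)]
    (e : ∀ n, Matrix (Fin n) (Fin n) A ≃⋆ₐ[ℂ] M n)
    -- `E` is completely approximately 1-generated
    (h1gen : ∀ n : ℕ, {X : M n | X ∈ matrixLevelSet E (e n) ∧ star X = X ∧ ‖X‖ ≤ 1} ⊆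
      closure {Y : M n | ∃ P Q : M n, P ∈ matrixLevelSet E (e n) ∧ 0 ≤ P ∧ ‖P‖ ≤ 1 ∧
        Q ∈ matrixLevelSet E (e n) ∧ 0 ≤ Q ∧ ‖Q‖ ≤ 1 ∧ Y = P - Q})
    (H : Type*) [NormedAddCommGroup H] [InnerProductSpace ℂ H] [CompleteSpace H]
    (N : ℕ → Type*) [∀ n, NonUnitalCStarAlgebra (N n)] [∀ n, PartialOrder (N n)]
    [∀ n, StarOrderedRing (N n)]
    (f : ∀ n, Matrix (Fin n) (Fin n) (H →L[ℂ] H) ≃⋆ₐ[ℂ] N n)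
    (θ : E →ₗ[ℂ] (H →L[ℂ] H))
    -- `θ` is star-preserving
    (hstar : ∀ (x : A) (hx : x ∈ E) (hsx : star x ∈ E),
      θ ⟨star x, hsx⟩ = star (θ ⟨x, hx⟩))
    -- `θ` is completely isometric
    (hisom : ∀ (n : ℕ) (X : M n) (hX : ∀ i j, (e n).symm X i j ∈ E),
      ‖(f n) (Matrix.of fun i j => θ ⟨(e n).symm X i j, hX i j⟩)‖ = ‖X‖)
    -- `θ` is a complete order embedding
    (horder : ∀ (n : ℕ) (X : M n) (hX : ∀ i j, (e n).symm X i j ∈ E),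
      0 ≤ (f n) (Matrix.of fun i j => θ ⟨(e n).symm X i j, hX i j⟩) ↔ 0 ≤ X) :
    -- then `θ` is a gauge maximal isometry
    ∀ (n : ℕ) (X : M n) (hX : ∀ i j, (e n).symm X i j ∈ E), IsSelfAdjoint X →
      Metric.infDist X {Y : M n | Y ∈ matrixLevelSet E (e n) ∧ 0 ≤ Y} =
        Metric.infDist ((f n) (Matrix.of fun i j => θ ⟨(e n).symm X i j, hX i j⟩))
          {Z : N n | 0 ≤ Z} := by
  intro n X hX hXsa
  classical
  set T : ∀ Y : M n, (∀ i j, (e n).symm Y i j ∈ E) → N n :=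
    fun Y hY => (f n) (Matrix.of fun i j => θ ⟨(e n).symm Y i j, hY i j⟩) with hT
  -- membership lemmas
  have mem0 : ∀ i j, (e n).symm (0 : M n) i j ∈ E := fun i j => by
    rw [map_zero, Matrix.zero_apply]; exact E.zero_mem
  have memadd : ∀ (Y Z : M n), (∀ i j, (e n).symm Y i j ∈ E) →
      (∀ i j, (e n).symm Z i j ∈ E) → ∀ i j, (e n).symm (Y + Z) i j ∈ E := by
    intro Y Z hY hZ i j
    rw [map_add, Matrix.add_apply]
    exact E.add_mem (hY i j) (hZ i j)
  have memsub : ∀ (Y Z : M n), (∀ i j, (e n).symm Y i j ∈ E) →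
      (∀ i j, (e n).symm Z i j ∈ E) → ∀ i j, (e n).symm (Y - Z) i j ∈ E := by
    intro Y Z hY hZ i j
    rw [map_sub, Matrix.sub_apply]
    exact E.sub_mem (hY i j) (hZ i j)
  have memsmul : ∀ (c : ℂ) (Y : M n), (∀ i j, (e n).symm Y i j ∈ E) →
      ∀ i j, (e n).symm (c • Y) i j ∈ E := by
    intro c Y hY i j
    rw [map_smul, Matrix.smul_apply]
    exact E.smul_mem c (hY i j)
  -- algebraic properties of `T`
  have T0 : ∀ h0 : (∀ i j, (e n).symm (0 : M n) i j ∈ E), T 0 h0 = 0 := by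
    intro h0
    simp only [hT]
    rw [← map_zero (f n)]
    congr 1
    ext i j
    simp only [Matrix.of_apply, Matrix.zero_apply]
    rw [← map_zero θ]
    have harg : (⟨(e n).symm (0 : M n) i j, h0 i j⟩ : E) = 0 := Subtype.ext (by simp)
    rw [harg]
  have Tadd : ∀ (Y Z : M n) (hY : ∀ i j, (e n).symm Y i j ∈ E)
      (hZ : ∀ i j, (e n).symm Z i j ∈ E) (hYZ : ∀ i j, (e n).symm (Y + Z) i j ∈ E),
      T (Y + Z) hYZ = T Y hY + T Z hZ := by
    intro Y Z hY hZ hYZ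
    simp only [hT]
    rw [← map_add (f n)]
    congr 1
    ext i j
    simp only [Matrix.of_apply, Matrix.add_apply]
    rw [← map_add θ]
    have harg : (⟨(e n).symm (Y + Z) i j, hYZ i j⟩ : E) =
        ⟨(e n).symm Y i j, hY i j⟩ + ⟨(e n).symm Z i j, hZ i j⟩ :=
      Subtype.ext (by simp [map_add])
    rw [harg]
  have Tsub : ∀ (Y Z : M n) (hY : ∀ i j, (e n).symm Y i j ∈ E)
      (hZ : ∀ i j, (e n).symm Z i j ∈ E) (hYZ : ∀ i j, (e n).symm (Y - Z) i j ∈ E),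
      T (Y - Z) hYZ = T Y hY - T Z hZ := by
    intro Y Z hY hZ hYZ
    simp only [hT]
    rw [← map_sub (f n)]
    congr 1
    ext i j
    simp only [Matrix.of_apply, Matrix.sub_apply]
    rw [← map_sub θ]
    have harg : (⟨(e n).symm (Y - Z) i j, hYZ i j⟩ : E) =
        ⟨(e n).symm Y i j, hY i j⟩ - ⟨(e n).symm Z i j, hZ i j⟩ :=
      Subtype.ext (by simp [map_sub])
    rw [harg]
  have Tsmul : ∀ (c : ℂ) (Y : M n) (hY : ∀ i j, (e n).symm Y i j ∈ E)
      (hcY : ∀ i j, (e n).symm (c • Y) i j ∈ E),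
      T (c • Y) hcY = c • T Y hY := by
    intro c Y hY hcY
    simp only [hT]
    rw [← map_smul (f n)]
    congr 1
    ext i j
    simp only [Matrix.of_apply, Matrix.smul_apply]
    rw [← map_smul θ]
    have harg : (⟨(e n).symm (c • Y) i j, hcY i j⟩ : E) =
        c • ⟨(e n).symm Y i j, hY i j⟩ :=
      Subtype.ext (by simp [map_smul])
    rw [harg]
  have Tisom : ∀ (Y : M n) (hY : ∀ i j, (e n).symm Y i j ∈ E), ‖T Y hY‖ = ‖Y‖ := by
    intro Y hY
    rw [hT]
    exact hisom n Y hY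
  have Tord : ∀ (Y : M n) (hY : ∀ i j, (e n).symm Y i j ∈ E), 0 ≤ T Y hY ↔ 0 ≤ Y := by
    intro Y hY
    rw [hT]
    exact horder n Y hY
  have Tdist : ∀ (Y Z : M n) (hY : ∀ i j, (e n).symm Y i j ∈ E)
      (hZ : ∀ i j, (e n).symm Z i j ∈ E),
      dist (T Y hY) (T Z hZ) = dist Y Z := by
    intro Y Z hY hZ
    rw [dist_eq_norm, dist_eq_norm, ← Tsub Y Z hY hZ (memsub Y Z hY hZ),
      Tisom _ (memsub Y Z hY hZ)]
  -- the cones and the subspace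
  set CE : Set (M n) := {Y : M n | Y ∈ matrixLevelSet E (e n) ∧ 0 ≤ Y} with hCE
  set CF : Set (N n) :=
    {z : N n | ∃ (Y : M n) (hY : ∀ i j, (e n).symm Y i j ∈ E), 0 ≤ Y ∧ z = T Y hY} with hCF
  have hCEne : CE.Nonempty := ⟨0, ⟨mem0, le_refl 0⟩⟩
  have hCFne : CF.Nonempty := ⟨T 0 mem0, ⟨0, mem0, le_refl 0, rfl⟩⟩
  -- Step 1 : `infDist X CE = infDist (T X hX) CF`
  have step1 : Metric.infDist X CE = Metric.infDist (T X hX) CF := by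
    apply le_antisymm
    · refine le_of_not_gt fun hlt => ?_
      obtain ⟨z, hzCF, hdz⟩ := (Metric.infDist_lt_iff hCFne).mp hlt
      obtain ⟨Y, hY, hY0, rfl⟩ := hzCF
      rw [Tdist X Y hX hY] at hdz
      have : Metric.infDist X CE ≤ dist X Y :=
        Metric.infDist_le_dist_of_mem ⟨hY, hY0⟩
      linarith
    · refine le_of_not_gt fun hlt => ?_
      obtain ⟨Y, hYCE, hdz⟩ := (Metric.infDist_lt_iff hCEne).mp hlt
      obtain ⟨hY, hY0⟩ := hYCE
      have hY' : ∀ i j, (e n).symm Y i j ∈ E := hY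
      have : Metric.infDist (T X hX) CF ≤ dist (T X hX) (T Y hY') :=
        Metric.infDist_le_dist_of_mem ⟨Y, hY', hY0, rfl⟩
      rw [Tdist X Y hX hY'] at this
      linarith
  -- the real subspace of the `N n`-side
  set VF : Submodule ℝ (N n) :=
    { carrier := {v : N n | ∃ (Y : M n) (hY : ∀ i j, (e n).symm Y i j ∈ E),
        IsSelfAdjoint Y ∧ v = T Y hY}
      add_mem' := by
        rintro v w ⟨Y, hY, hYs, rfl⟩ ⟨Z, hZ, hZs, rfl⟩
        exact ⟨Y + Z, memadd Y Z hY hZ, hYs.add hZs, (Tadd Y Z hY hZ (memadd Y Z hY hZ)).symm⟩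
      zero_mem' := ⟨0, mem0, IsSelfAdjoint.zero (M n), (T0 mem0).symm⟩
      smul_mem' := by
        rintro r v ⟨Y, hY, hYs, rfl⟩
        refine ⟨(r : ℂ) • Y, memsmul (r : ℂ) Y hY, ?_, ?_⟩
        · have : star ((r : ℂ) • Y) = (r : ℂ) • Y := by
            rw [star_smul, hYs.star_eq, Complex.star_def, Complex.conj_ofReal]
          exact this
        · rw [Tsmul (r : ℂ) Y hY (memsmul (r : ℂ) Y hY), Complex.coe_smul] } with hVF
  -- Step 2 : core lemma on the `N n` side
  have step2 : Metric.infDist (T X hX) CF = Metric.infDist (T X hX) {z : N n | 0 ≤ z} := by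
    apply core_lemma CF VF
    · rintro c ⟨Y, hY, hY0, rfl⟩
      exact (Tord Y hY).mpr hY0
    · exact ⟨0, mem0, le_refl 0, (T0 mem0).symm⟩
    · rintro c ⟨Y, hY, hY0, rfl⟩ d ⟨Z, hZ, hZ0, rfl⟩
      exact ⟨Y + Z, memadd Y Z hY hZ, add_nonneg hY0 hZ0,
        (Tadd Y Z hY hZ (memadd Y Z hY hZ)).symm⟩
    · rintro t ht c ⟨Y, hY, hY0, rfl⟩
      refine ⟨(t : ℂ) • Y, memsmul (t : ℂ) Y hY, ?_, ?_⟩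
      · rw [Complex.coe_smul]
        exact smul_nonneg ht.le hY0
      · rw [Tsmul (t : ℂ) Y hY (memsmul (t : ℂ) Y hY), Complex.coe_smul]
    · rintro z ⟨Y, hY, hY0, rfl⟩
      exact ⟨Y, hY, IsSelfAdjoint.of_nonneg hY0, rfl⟩
    · rintro v ⟨Y, hY, hYs, rfl⟩ hv1
      have hY1 : ‖Y‖ ≤ 1 := by rw [← Tisom Y hY]; exact hv1
      have hYcl := h1gen n ⟨hY, hYs.star_eq, hY1⟩
      rw [Metric.mem_closure_iff] at hYcl ⊢
      intro ε hε
      obtain ⟨W, hWD, hWd⟩ := hYcl ε hε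
      obtain ⟨P, Q, hPmem, hP0, hP1, hQmem, hQ0, hQ1, rfl⟩ := hWD
      have hP' : ∀ i j, (e n).symm P i j ∈ E := hPmem
      have hQ' : ∀ i j, (e n).symm Q i j ∈ E := hQmem
      refine ⟨T P hP' - T Q hQ', ?_, ?_⟩
      · refine ⟨T P hP', ⟨P, hP', hP0, rfl⟩, T Q hQ', ⟨Q, hQ', hQ0, rfl⟩, ?_, ?_, rfl⟩
        · rw [Tisom P hP']; exact hP1
        · rw [Tisom Q hQ']; exact hQ1
      · rw [← Tsub P Q hP' hQ' (memsub P Q hP' hQ'), Tdist Y (P - Q) hY (memsub P Q hP' hQ')]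
        exact hWd
    · exact ⟨X, hX, hXsa, rfl⟩
  exact step1.trans step2
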